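/- There exists a universal constant C such that for all 0 < t₁ < t₂ one has ∫₀^{t₁} ( ∫_ℝ |G_{t₂−s}(x) − G_{t₁−s}(x)| · |x|^{1/2} dx )² ds ≤ C (t₂ − t₁)^{3/2}. -/

import Mathlib

open MeasureTheory Real Filter

noncomputable def G (t x : ℝ) : ℝ :=
  (4 * Real.pi * t) ^ (-(1:ℝ)/2) * Real.exp (-x ^ 2 / (4 * t))

noncomputable def K : ℝ := ∫ x : ℝ, Real.exp (-x ^ 2 / 4) * |x| ^ ((1:ℝ)/2)

lemma K_nonneg : 0 ≤ K :=
  integral_nonneg fun x => mul_nonneg (Real.exp_pos _).le (Real.rpow_nonneg (abs_nonneg _) _)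

lemma phi_cont (t : ℝ) : Continuous (fun x : ℝ => Real.exp (-x ^ 2 / (4 * t)) * |x| ^ ((1:ℝ)/2)) := by
  apply Continuous.mul
  · exact (Continuous.div_const (by continuity) _).rexp
  · exact continuous_abs.rpow_const (fun x => Or.inr (by norm_num))

lemma phi_integrable {t : ℝ} (ht : 0 < t) :
    Integrable (fun x : ℝ => Real.exp (-x ^ 2 / (4 * t)) * |x| ^ ((1:ℝ)/2)) := by
  have hb : 0 < 1 / (4 * t) := by positivity
  have hg : Integrable (fun x : ℝ => Real.exp (-(1/(4*t)) * x ^ 2)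
      + |x * Real.exp (-(1/(4*t)) * x ^ 2)|) :=
    (integrable_exp_neg_mul_sq hb).add (integrable_mul_exp_neg_mul_sq hb).abs
  refine hg.mono' ((phi_cont t).aestronglyMeasurable) (Filter.Eventually.of_forall fun x => ?_)
  have h1 : |x| ^ ((1:ℝ)/2) ≤ 1 + |x| := by
    rcases le_total (|x|) 1 with h | h
    · have := Real.rpow_le_one (abs_nonneg x) h (by norm_num : (0:ℝ) ≤ 1/2)
      nlinarith [abs_nonneg x]
    · have h2 : |x| ^ ((1:ℝ)/2) ≤ |x| ^ (1:ℝ) :=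
        Real.rpow_le_rpow_of_exponent_le h (by norm_num)
      rw [Real.rpow_one] at h2
      linarith
    -- end
  have hexp : Real.exp (-x ^ 2 / (4 * t)) = Real.exp (-(1/(4*t)) * x ^ 2) := by ring_nf
  rw [Real.norm_eq_abs, abs_mul, abs_of_nonneg (Real.exp_pos _).le,
    abs_of_nonneg (Real.rpow_nonneg (abs_nonneg _) _), hexp, abs_mul,
    abs_of_nonneg (Real.exp_pos _).le]
  have hx := Real.exp_pos (-(1/(4*t)) * x ^ 2)
  nlinarith [Real.rpow_nonneg (abs_nonneg x) ((1:ℝ)/2), abs_nonneg x]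

lemma phi_integral {t : ℝ} (ht : 0 < t) :
    ∫ x : ℝ, Real.exp (-x ^ 2 / (4 * t)) * |x| ^ ((1:ℝ)/2) = t ^ ((3:ℝ)/4) * K := by
  have hst : (0:ℝ) < t ^ ((1:ℝ)/2) := Real.rpow_pos_of_pos ht _
  have key := MeasureTheory.Measure.integral_comp_mul_left
    (fun x : ℝ => Real.exp (-x ^ 2 / (4 * t)) * |x| ^ ((1:ℝ)/2)) (t ^ ((1:ℝ)/2))
  have hsq : (t ^ ((1:ℝ)/2)) ^ 2 = t := by
    rw [← Real.rpow_natCast (t ^ ((1:ℝ)/2)) 2, ← Real.rpow_mul ht.le]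
    norm_num
  have h2 : ∀ y : ℝ, Real.exp (-(t ^ ((1:ℝ)/2) * y) ^ 2 / (4 * t)) * |t ^ ((1:ℝ)/2) * y| ^ ((1:ℝ)/2)
      = t ^ ((1:ℝ)/4) * (Real.exp (-y ^ 2 / 4) * |y| ^ ((1:ℝ)/2)) := by
    intro y
    have e1 : (-(t ^ ((1:ℝ)/2) * y) ^ 2 / (4 * t)) = -y ^ 2 / 4 := by
      rw [mul_pow, hsq]; field_simp
    have e2 : |t ^ ((1:ℝ)/2) * y| ^ ((1:ℝ)/2) = t ^ ((1:ℝ)/4) * |y| ^ ((1:ℝ)/2) := by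
      rw [abs_mul, abs_of_pos hst, Real.mul_rpow hst.le (abs_nonneg _), ← Real.rpow_mul ht.le]
      norm_num
    rw [e1, e2]; ring
  simp only [h2] at key
  rw [MeasureTheory.integral_const_mul] at key
  rw [abs_of_pos (inv_pos.mpr hst), smul_eq_mul] at key
  have hK : (K : ℝ) = ∫ x : ℝ, Real.exp (-x ^ 2 / 4) * |x| ^ ((1:ℝ)/2) := rfl
  rw [← hK] at key
  have : (∫ x : ℝ, Real.exp (-x ^ 2 / (4 * t)) * |x| ^ ((1:ℝ)/2))
      = t ^ ((1:ℝ)/2) * (t ^ ((1:ℝ)/4) * K) := by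
    field_simp at key
    simp only [neg_div] at key ⊢
    linarith [key]
  rw [this, ← mul_assoc, ← Real.rpow_add ht]
  norm_num

noncomputable def c2 : ℝ := (4 * Real.pi) ^ (-(1:ℝ)/2) * K

lemma c2_nonneg : 0 ≤ c2 :=
  mul_nonneg (Real.rpow_nonneg (by positivity) _) K_nonneg

lemma G_nonneg {t : ℝ} (ht : 0 < t) (x : ℝ) : 0 ≤ G t x :=
  mul_nonneg (Real.rpow_nonneg (by positivity) _) (Real.exp_pos _).le

lemma G_zero (x : ℝ) : G 0 x = 0 := by
  simp [G, Real.zero_rpow (by norm_num : (-(1:ℝ)/2) ≠ 0)]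

lemma G_cont (t : ℝ) : Continuous (G t) := by
  apply continuous_const.mul
  exact ((Continuous.div_const (by continuity) _)).rexp

lemma diff_cont (a b : ℝ) : Continuous fun x : ℝ => |G a x - G b x| * |x| ^ ((1:ℝ)/2) := by
  apply Continuous.mul
  · exact ((G_cont a).sub (G_cont b)).abs
  · exact continuous_abs.rpow_const (fun x => Or.inr (by norm_num))

lemma G_weighted_integrable {t : ℝ} (ht : 0 < t) :
    Integrable (fun x : ℝ => G t x * |x| ^ ((1:ℝ)/2)) := by
  simp only [G, mul_assoc]
  exact (phi_integrable ht).const_mul _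

lemma G_weighted {t : ℝ} (ht : 0 < t) :
    ∫ x : ℝ, G t x * |x| ^ ((1:ℝ)/2) = c2 * t ^ ((1:ℝ)/4) := by
  simp only [G, mul_assoc]
  rw [MeasureTheory.integral_const_mul, phi_integral ht,
    show (4*(Real.pi*t)) = (4*Real.pi)*t from by ring,
    Real.mul_rpow (by positivity : (0:ℝ) ≤ 4 * Real.pi) ht.le, c2]
  rw [mul_assoc, mul_assoc, mul_comm K, ← mul_assoc (t ^ (-(1:ℝ)/2)), ← Real.rpow_add ht]
  norm_num

lemma inner_nonneg (a b : ℝ) : 0 ≤ ∫ x : ℝ, |G a x - G b x| * |x| ^ ((1:ℝ)/2) :=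
  integral_nonneg fun x => mul_nonneg (abs_nonneg _) (Real.rpow_nonneg (abs_nonneg _) _)

lemma diff_integrable {a b : ℝ} (ha : 0 < a) (hb : 0 < b) :
    Integrable (fun x : ℝ => |G a x - G b x| * |x| ^ ((1:ℝ)/2)) := by
  refine ((G_weighted_integrable ha).add (G_weighted_integrable hb)).mono'
    (diff_cont a b).aestronglyMeasurable (Filter.Eventually.of_forall fun x => ?_)
  simp only [Pi.add_apply]
  have hw : 0 ≤ |x| ^ ((1:ℝ)/2) := Real.rpow_nonneg (abs_nonneg _) _
  rw [Real.norm_eq_abs, abs_of_nonneg (mul_nonneg (abs_nonneg _) hw)]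
  have h1 : |G a x - G b x| ≤ G a x + G b x :=
    (abs_sub (G a x) (G b x)).trans (by
      rw [abs_of_nonneg (G_nonneg ha x), abs_of_nonneg (G_nonneg hb x)])
  nlinarith [G_nonneg ha x, G_nonneg hb x]

lemma inner_le_one {a b : ℝ} (ha : 0 < a) (hb0 : 0 ≤ b) (hba : b ≤ a) :
    ∫ x : ℝ, |G a x - G b x| * |x| ^ ((1:ℝ)/2) ≤ 2 * c2 * a ^ ((1:ℝ)/4) := by
  have hq : 0 ≤ a ^ ((1:ℝ)/4) := Real.rpow_nonneg ha.le _
  rcases hb0.eq_or_lt with rfl | hb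
  · have h : ∀ x : ℝ, |G a x - G 0 x| * |x| ^ ((1:ℝ)/2) = G a x * |x| ^ ((1:ℝ)/2) :=
      fun x => by rw [G_zero, sub_zero, abs_of_nonneg (G_nonneg ha x)]
    simp only [h]
    rw [G_weighted ha]
    nlinarith [c2_nonneg]
  · have hpt : ∀ x : ℝ, |G a x - G b x| * |x| ^ ((1:ℝ)/2)
        ≤ G a x * |x| ^ ((1:ℝ)/2) + G b x * |x| ^ ((1:ℝ)/2) := by
      intro x
      have hw : 0 ≤ |x| ^ ((1:ℝ)/2) := Real.rpow_nonneg (abs_nonneg _) _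
      have h1 : |G a x - G b x| ≤ G a x + G b x :=
        (abs_sub (G a x) (G b x)).trans (by
          rw [abs_of_nonneg (G_nonneg ha x), abs_of_nonneg (G_nonneg hb x)])
      nlinarith
    calc ∫ x : ℝ, |G a x - G b x| * |x| ^ ((1:ℝ)/2)
        ≤ ∫ x : ℝ, (G a x * |x| ^ ((1:ℝ)/2) + G b x * |x| ^ ((1:ℝ)/2)) :=
          integral_mono (diff_integrable ha hb)
            ((G_weighted_integrable ha).add (G_weighted_integrable hb)) hpt
      _ = c2 * a ^ ((1:ℝ)/4) + c2 * b ^ ((1:ℝ)/4) := by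
          rw [integral_add (G_weighted_integrable ha) (G_weighted_integrable hb),
            G_weighted ha, G_weighted hb]
      _ ≤ 2 * c2 * a ^ ((1:ℝ)/4) := by
          have : b ^ ((1:ℝ)/4) ≤ a ^ ((1:ℝ)/4) :=
            Real.rpow_le_rpow hb.le hba (by norm_num)
          nlinarith [c2_nonneg]

lemma alg_key {a b : ℝ} (hb : 0 < b) (hba : b ≤ a) :
    (b ^ (-(1:ℝ)/2) - a ^ (-(1:ℝ)/2)) * a ^ ((3:ℝ)/4)
      + b ^ (-(1:ℝ)/2) * (a ^ ((3:ℝ)/4) - b ^ ((3:ℝ)/4))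
      ≤ 2 * (a - b) * b ^ (-(3:ℝ)/4) := by
  have ha : 0 < a := hb.trans_le hba
  set p := b ^ ((1:ℝ)/4) with hp_def
  set q := a ^ ((1:ℝ)/4) with hq_def
  have hp : 0 < p := Real.rpow_pos_of_pos hb _
  have hq : 0 < q := Real.rpow_pos_of_pos ha _
  have hpq : p ≤ q := Real.rpow_le_rpow hb.le hba (by norm_num)
  have pow_eq : ∀ (t : ℝ) (ht : 0 < t) (n : ℕ), (t ^ ((1:ℝ)/4)) ^ (n:ℕ) = t ^ ((n:ℝ)/4) := by
    intro t ht n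
    rw [← Real.rpow_natCast (t ^ ((1:ℝ)/4)) n, ← Real.rpow_mul ht.le]
    ring_nf
  have f1 : b ^ (-(1:ℝ)/2) = (p ^ 2)⁻¹ := by
    rw [hp_def, pow_eq b hb 2, ← Real.rpow_neg hb.le]; norm_num
  have f2 : a ^ (-(1:ℝ)/2) = (q ^ 2)⁻¹ := by
    rw [hq_def, pow_eq a ha 2, ← Real.rpow_neg ha.le]; norm_num
  have f3 : a ^ ((3:ℝ)/4) = q ^ 3 := by rw [hq_def, pow_eq a ha 3]; norm_num
  have f4 : b ^ ((3:ℝ)/4) = p ^ 3 := by rw [hp_def, pow_eq b hb 3]; norm_num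
  have f5 : b ^ (-(3:ℝ)/4) = (p ^ 3)⁻¹ := by
    rw [hp_def, pow_eq b hb 3, ← Real.rpow_neg hb.le]; norm_num
  have f6 : a = q ^ 4 := by rw [hq_def, pow_eq a ha 4]; norm_num [Real.rpow_natCast]
  have f7 : b = p ^ 4 := by rw [hp_def, pow_eq b hb 4]; norm_num [Real.rpow_natCast]
  rw [f1, f2, f3, f4, f5, f6, f7]
  have key : 0 ≤ (q - p) * (2 * q ^ 3 + p ^ 3) :=
    mul_nonneg (sub_nonneg.2 hpq) (by positivity)
  have h1 : ((p ^ 2)⁻¹ - (q ^ 2)⁻¹) * q ^ 3 + (p ^ 2)⁻¹ * (q ^ 3 - p ^ 3)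
      = 2 * q ^ 3 / p ^ 2 - q - p := by field_simp; ring
  have h2 : 2 * (q ^ 4 - p ^ 4) * (p ^ 3)⁻¹ = 2 * (q ^ 4 - p ^ 4) / p ^ 3 := by ring
  rw [h1, h2, ← sub_nonneg]
  have h3 : 2 * (q ^ 4 - p ^ 4) / p ^ 3 - (2 * q ^ 3 / p ^ 2 - q - p)
      = ((q - p) * (2 * q ^ 3 + p ^ 3)) / p ^ 3 := by field_simp; ring
  rw [h3]
  exact div_nonneg key (by positivity)

lemma inner_le_two {a b : ℝ} (hb : 0 < b) (hba : b ≤ a) :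
    ∫ x : ℝ, |G a x - G b x| * |x| ^ ((1:ℝ)/2)
      ≤ 2 * c2 * (a - b) * b ^ (-(3:ℝ)/4) := by
  have ha : 0 < a := hb.trans_le hba
  set ca := (4 * Real.pi * a) ^ (-(1:ℝ)/2) with hca_def
  set cb := (4 * Real.pi * b) ^ (-(1:ℝ)/2) with hcb_def
  have hca_nonneg : 0 ≤ ca := Real.rpow_nonneg (by positivity) _
  have hcb_nonneg : 0 ≤ cb := Real.rpow_nonneg (by positivity) _
  have hcacb : ca ≤ cb :=
    Real.rpow_le_rpow_of_nonpos (by positivity) (by nlinarith [Real.pi_pos]) (by norm_num)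
  have hpt : ∀ x : ℝ, |G a x - G b x| * |x| ^ ((1:ℝ)/2)
      ≤ (cb - ca) * (Real.exp (-x ^ 2 / (4 * a)) * |x| ^ ((1:ℝ)/2))
        + cb * (Real.exp (-x ^ 2 / (4 * a)) * |x| ^ ((1:ℝ)/2)
              - Real.exp (-x ^ 2 / (4 * b)) * |x| ^ ((1:ℝ)/2)) := by
    intro x
    have hw : 0 ≤ |x| ^ ((1:ℝ)/2) := Real.rpow_nonneg (abs_nonneg _) _
    have he : Real.exp (-x ^ 2 / (4 * b)) ≤ Real.exp (-x ^ 2 / (4 * a)) := by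
      apply Real.exp_le_exp.mpr
      rw [div_le_div_iff₀ (by positivity) (by positivity)]
      nlinarith [sq_nonneg x]
    have heb : 0 < Real.exp (-x ^ 2 / (4 * b)) := Real.exp_pos _
    have habs : |G a x - G b x| ≤ (cb - ca) * Real.exp (-x ^ 2 / (4 * a))
        + cb * (Real.exp (-x ^ 2 / (4 * a)) - Real.exp (-x ^ 2 / (4 * b))) := by
      rw [G, G, ← hca_def, ← hcb_def]
      rw [abs_le]
      constructor <;> nlinarith [Real.exp_pos (-x ^ 2 / (4 * a))]
    nlinarith [abs_nonneg (G a x - G b x)]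
  have hint : Integrable (fun x : ℝ =>
      (cb - ca) * (Real.exp (-x ^ 2 / (4 * a)) * |x| ^ ((1:ℝ)/2))
        + cb * (Real.exp (-x ^ 2 / (4 * a)) * |x| ^ ((1:ℝ)/2)
              - Real.exp (-x ^ 2 / (4 * b)) * |x| ^ ((1:ℝ)/2))) :=
    (((phi_integrable ha).const_mul _).add
      (((phi_integrable ha).sub (phi_integrable hb)).const_mul _))
  calc ∫ x : ℝ, |G a x - G b x| * |x| ^ ((1:ℝ)/2)
      ≤ ∫ x : ℝ, ((cb - ca) * (Real.exp (-x ^ 2 / (4 * a)) * |x| ^ ((1:ℝ)/2))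
        + cb * (Real.exp (-x ^ 2 / (4 * a)) * |x| ^ ((1:ℝ)/2)
              - Real.exp (-x ^ 2 / (4 * b)) * |x| ^ ((1:ℝ)/2))) := by
        refine integral_mono (diff_integrable ha hb) hint hpt
    _ = (cb - ca) * (a ^ ((3:ℝ)/4) * K) + cb * (a ^ ((3:ℝ)/4) * K - b ^ ((3:ℝ)/4) * K) := by
        have hsub : Integrable (fun x : ℝ => Real.exp (-x ^ 2 / (4 * a)) * |x| ^ ((1:ℝ)/2)
            - Real.exp (-x ^ 2 / (4 * b)) * |x| ^ ((1:ℝ)/2)) :=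
          (phi_integrable ha).sub (phi_integrable hb)
        rw [integral_add ((phi_integrable ha).const_mul (cb - ca)) (hsub.const_mul cb),
          MeasureTheory.integral_const_mul, MeasureTheory.integral_const_mul,
          integral_sub (phi_integrable ha) (phi_integrable hb),
          phi_integral ha, phi_integral hb]
    _ ≤ 2 * c2 * (a - b) * b ^ (-(3:ℝ)/4) := by
        have hca : ca = (4 * Real.pi) ^ (-(1:ℝ)/2) * a ^ (-(1:ℝ)/2) := by
          rw [hca_def, Real.mul_rpow (by positivity) ha.le]
        have hcb : cb = (4 * Real.pi) ^ (-(1:ℝ)/2) * b ^ (-(1:ℝ)/2) := by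
          rw [hcb_def, Real.mul_rpow (by positivity) hb.le]
        have hmain := alg_key hb hba
        have hc : (0:ℝ) ≤ (4 * Real.pi) ^ (-(1:ℝ)/2) := Real.rpow_nonneg (by positivity) _
        have := mul_le_mul_of_nonneg_left hmain (mul_nonneg hc K_nonneg)
        rw [hca, hcb]
        show _ ≤ 2 * ((4 * Real.pi) ^ (-(1:ℝ)/2) * K) * (a - b) * b ^ (-(3:ℝ)/4)
        nlinarith [this]

lemma F_aesm (t₁ t₂ : ℝ) : AEStronglyMeasurable
    (fun s : ℝ => (∫ x : ℝ, |G (t₂ - s) x - G (t₁ - s) x| * |x| ^ ((1:ℝ)/2)) ^ 2) volume := by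
  have hrpow : Measurable (fun x : ℝ => x ^ (-(1:ℝ)/2)) := by
    have heq : (fun x : ℝ => x ^ (-(1:ℝ)/2))
        = fun x => if 0 < x then Real.exp (Real.log x * (-(1:ℝ)/2)) else 0 := by
      funext x
      rcases lt_trichotomy x 0 with h | h | h
      · rw [if_neg (by linarith), Real.rpow_def_of_neg h,
          show (-(1:ℝ)/2 * Real.pi) = -(Real.pi/2) by ring, Real.cos_neg,
          Real.cos_pi_div_two, mul_zero]
      · rw [h, if_neg (lt_irrefl 0), Real.zero_rpow (by norm_num)]
      · rw [if_pos h, Real.rpow_def_of_pos h]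
    rw [heq]
    exact Measurable.ite (measurableSet_lt measurable_const measurable_id)
      (Real.measurable_log.mul_const _).exp measurable_const
  have hH : Measurable (fun p : ℝ × ℝ =>
      |G (t₂ - p.1) p.2 - G (t₁ - p.1) p.2| * |p.2| ^ ((1:ℝ)/2)) := by
    unfold G
    apply Measurable.mul
    · apply Measurable.abs
      apply Measurable.sub <;>
      · apply Measurable.mul
        · exact hrpow.comp (measurable_const.mul (measurable_const.sub measurable_fst))
        · exact ((measurable_snd.pow measurable_const).neg.div
            (measurable_const.mul (measurable_const.sub measurable_fst))).exp
    · exact (continuous_abs.rpow_const (fun x => Or.inr (by norm_num : (0:ℝ) ≤ 1/2)))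
        |>.measurable.comp measurable_snd
  exact (hH.aestronglyMeasurable.integral_prod_right').pow _

lemma F_le_const {t₁ t₂ s M : ℝ} (h1 : 0 < t₁) (h2 : t₁ < t₂) (hs0 : 0 ≤ s) (hs1 : s ≤ t₁)
    (hM : t₂ - s ≤ M) :
    (∫ x : ℝ, |G (t₂ - s) x - G (t₁ - s) x| * |x| ^ ((1:ℝ)/2)) ^ 2
      ≤ 4 * c2 ^ 2 * M ^ ((1:ℝ)/2) := by
  have ha : 0 < t₂ - s := by linarith
  have hI := inner_le_one ha (by linarith : 0 ≤ t₁ - s) (by linarith)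
  have h0 := inner_nonneg (t₂ - s) (t₁ - s)
  have hM0 : 0 < M := lt_of_lt_of_le ha hM
  have hr : (t₂ - s) ^ ((1:ℝ)/4) ≤ M ^ ((1:ℝ)/4) := Real.rpow_le_rpow ha.le hM (by norm_num)
  calc (∫ x : ℝ, |G (t₂ - s) x - G (t₁ - s) x| * |x| ^ ((1:ℝ)/2)) ^ 2
      ≤ (2 * c2 * M ^ ((1:ℝ)/4)) ^ 2 := by
        apply pow_le_pow_left₀ h0
        refine hI.trans ?_
        nlinarith [c2_nonneg]
    _ = 4 * c2 ^ 2 * (M ^ ((1:ℝ)/4)) ^ 2 := by ring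
    _ = 4 * c2 ^ 2 * M ^ ((1:ℝ)/2) := by
        rw [← Real.rpow_natCast (M ^ ((1:ℝ)/4)) 2, ← Real.rpow_mul hM0.le]
        norm_num

lemma F_le_decay {t₁ t₂ s : ℝ} (h2 : t₁ < t₂) (hs1 : s < t₁) :
    (∫ x : ℝ, |G (t₂ - s) x - G (t₁ - s) x| * |x| ^ ((1:ℝ)/2)) ^ 2
      ≤ 4 * c2 ^ 2 * (t₂ - t₁) ^ 2 * (t₁ - s) ^ (-(3:ℝ)/2) := by
  have hb : 0 < t₁ - s := by linarith
  have hI := inner_le_two hb (by linarith : t₁ - s ≤ t₂ - s)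
  have h0 := inner_nonneg (t₂ - s) (t₁ - s)
  have heq : t₂ - s - (t₁ - s) = t₂ - t₁ := by ring
  rw [heq] at hI
  calc (∫ x : ℝ, |G (t₂ - s) x - G (t₁ - s) x| * |x| ^ ((1:ℝ)/2)) ^ 2
      ≤ (2 * c2 * (t₂ - t₁) * (t₁ - s) ^ (-(3:ℝ)/4)) ^ 2 := pow_le_pow_left₀ h0 hI 2
    _ = 4 * c2 ^ 2 * (t₂ - t₁) ^ 2 * ((t₁ - s) ^ (-(3:ℝ)/4)) ^ 2 := by ring
    _ = 4 * c2 ^ 2 * (t₂ - t₁) ^ 2 * (t₁ - s) ^ (-(3:ℝ)/2) := by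
        rw [← Real.rpow_natCast ((t₁ - s) ^ (-(3:ℝ)/4)) 2, ← Real.rpow_mul hb.le]
        norm_num

lemma F_intInt {t₁ t₂ u v : ℝ} (h1 : 0 < t₁) (h2 : t₁ < t₂)
    (hu : u ∈ Set.Icc 0 t₁) (hv : v ∈ Set.Icc 0 t₁) :
    IntervalIntegrable (fun s : ℝ =>
      (∫ x : ℝ, |G (t₂ - s) x - G (t₁ - s) x| * |x| ^ ((1:ℝ)/2)) ^ 2) volume u v := by
  have base : IntervalIntegrable (fun s : ℝ =>
      (∫ x : ℝ, |G (t₂ - s) x - G (t₁ - s) x| * |x| ^ ((1:ℝ)/2)) ^ 2) volume 0 t₁ := by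
    rw [intervalIntegrable_iff_integrableOn_Ioc_of_le h1.le]
    refine Integrable.mono' (g := fun _ => 4 * c2 ^ 2 * t₂ ^ ((1:ℝ)/2))
      (integrableOn_const measure_Ioc_lt_top.ne)
      ((F_aesm t₁ t₂).restrict) ?_
    filter_upwards [ae_restrict_mem measurableSet_Ioc] with s hs
    have h0 := inner_nonneg (t₂ - s) (t₁ - s)
    rw [Real.norm_eq_abs, abs_of_nonneg (pow_nonneg h0 2)]
    exact F_le_const h1 h2 hs.1.le hs.2 (by linarith [hs.1])
  exact base.mono_set (Set.uIcc_subset_uIcc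
    (by rw [Set.uIcc_of_le h1.le]; exact hu) (by rw [Set.uIcc_of_le h1.le]; exact hv))

theorem heat_kernel_time_increment_half :
    ∃ C : ℝ, 0 < C ∧ ∀ t₁ t₂ : ℝ, 0 < t₁ → t₁ < t₂ →
      ∫ s in (0:ℝ)..t₁,
          (∫ x : ℝ, |G (t₂ - s) x - G (t₁ - s) x| * |x| ^ ((1:ℝ)/2)) ^ 2
        ≤ C * (t₂ - t₁) ^ ((3:ℝ)/2) := by
  refine ⟨16 * c2 ^ 2 + 1, by positivity, fun t₁ t₂ h1 h2 => ?_⟩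
  set δ := t₂ - t₁ with hδ_def
  have hδ : 0 < δ := by rw [hδ_def]; linarith
  have hδ32 : 0 ≤ δ ^ ((3:ℝ)/2) := Real.rpow_nonneg hδ.le _
  have key32 : δ ^ ((1:ℝ)/2) * δ = δ ^ ((3:ℝ)/2) := by
    nth_rewrite 2 [← Real.rpow_one δ]
    rw [← Real.rpow_add hδ]; norm_num
  have h4δ : ((4:ℝ) * δ) ^ ((1:ℝ)/2) = 2 * δ ^ ((1:ℝ)/2) := by
    rw [Real.mul_rpow (by norm_num) hδ.le, show (4:ℝ) = 2^2 by norm_num,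
      ← Real.rpow_natCast 2 2, ← Real.rpow_mul (by norm_num)]
    norm_num
  have hδ12 : 0 ≤ δ ^ ((1:ℝ)/2) := Real.rpow_nonneg hδ.le _
  rcases le_or_gt t₁ δ with hc | hc
  · -- short time interval: use constant bound
    calc ∫ s in (0:ℝ)..t₁,
          (∫ x : ℝ, |G (t₂ - s) x - G (t₁ - s) x| * |x| ^ ((1:ℝ)/2)) ^ 2
        ≤ ∫ _ in (0:ℝ)..t₁, 4 * c2 ^ 2 * ((4:ℝ) * δ) ^ ((1:ℝ)/2) := by
          apply intervalIntegral.integral_mono_on h1.le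
            (F_intInt h1 h2 ⟨le_refl 0, h1.le⟩ ⟨h1.le, le_refl t₁⟩)
            intervalIntegrable_const
          intro s hs
          refine F_le_const h1 h2 hs.1 hs.2 ?_
          rw [hδ_def] at hc ⊢
          linarith [hs.1]
      _ = 4 * c2 ^ 2 * ((4:ℝ) * δ) ^ ((1:ℝ)/2) * t₁ := by
          rw [intervalIntegral.integral_const, smul_eq_mul, sub_zero, mul_comm]
      _ ≤ (16 * c2 ^ 2 + 1) * δ ^ ((3:ℝ)/2) := by
          rw [h4δ]
          have : 8 * c2 ^ 2 * δ ^ ((1:ℝ)/2) * t₁ ≤ 8 * c2 ^ 2 * δ ^ ((1:ℝ)/2) * δ := by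
            apply mul_le_mul_of_nonneg_left hc (by positivity)
          nlinarith [key32, sq_nonneg c2, hδ32]
  · -- long time interval: split at m = t₁ - δ
    have hm0 : 0 < t₁ - δ := by linarith
    have hsplit := intervalIntegral.integral_add_adjacent_intervals
      (F_intInt (u := 0) (v := t₁ - δ) h1 h2 ⟨le_refl 0, h1.le⟩ ⟨hm0.le, by linarith⟩)
      (F_intInt (u := t₁ - δ) (v := t₁) h1 h2 ⟨hm0.le, by linarith⟩ ⟨h1.le, le_refl t₁⟩)
    rw [← hsplit]
    have piece2 : ∫ s in (t₁ - δ)..t₁,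
          (∫ x : ℝ, |G (t₂ - s) x - G (t₁ - s) x| * |x| ^ ((1:ℝ)/2)) ^ 2
        ≤ 8 * c2 ^ 2 * δ ^ ((3:ℝ)/2) := by
      calc ∫ s in (t₁ - δ)..t₁,
            (∫ x : ℝ, |G (t₂ - s) x - G (t₁ - s) x| * |x| ^ ((1:ℝ)/2)) ^ 2
          ≤ ∫ _ in (t₁ - δ)..t₁, 4 * c2 ^ 2 * ((4:ℝ) * δ) ^ ((1:ℝ)/2) := by
            apply intervalIntegral.integral_mono_on (by linarith)
              (F_intInt h1 h2 ⟨hm0.le, by linarith⟩ ⟨h1.le, le_refl t₁⟩)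
              intervalIntegrable_const
            intro s hs
            refine F_le_const h1 h2 (by linarith [hs.1]) hs.2 ?_
            rw [hδ_def] at hs ⊢
            linarith [hs.1]
        _ = 4 * c2 ^ 2 * ((4:ℝ) * δ) ^ ((1:ℝ)/2) * δ := by
            rw [intervalIntegral.integral_const, smul_eq_mul, mul_comm]
            ring_nf
        _ = 8 * c2 ^ 2 * δ ^ ((3:ℝ)/2) := by
            rw [h4δ, ← key32]; ring
    have piece1 : ∫ s in (0:ℝ)..(t₁ - δ),
          (∫ x : ℝ, |G (t₂ - s) x - G (t₁ - s) x| * |x| ^ ((1:ℝ)/2)) ^ 2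
        ≤ 8 * c2 ^ 2 * δ ^ ((3:ℝ)/2) := by
      have hg_cont : ContinuousOn (fun s : ℝ => (t₁ - s) ^ (-(3:ℝ)/2))
          (Set.uIcc 0 (t₁ - δ)) := by
        apply ContinuousOn.rpow_const ((continuous_const.sub continuous_id).continuousOn)
        intro x hx
        rw [Set.uIcc_of_le hm0.le] at hx
        exact Or.inl (by have := hx.2; intro h; simp at h; nlinarith [hδ])
      have hg_int : IntervalIntegrable
          (fun s : ℝ => 4 * c2 ^ 2 * δ ^ 2 * (t₁ - s) ^ (-(3:ℝ)/2)) volume 0 (t₁ - δ) :=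
        (continuousOn_const.mul hg_cont).intervalIntegrable
      have hmono : ∫ s in (0:ℝ)..(t₁ - δ),
            (∫ x : ℝ, |G (t₂ - s) x - G (t₁ - s) x| * |x| ^ ((1:ℝ)/2)) ^ 2
          ≤ ∫ s in (0:ℝ)..(t₁ - δ), 4 * c2 ^ 2 * δ ^ 2 * (t₁ - s) ^ (-(3:ℝ)/2) := by
        apply intervalIntegral.integral_mono_on hm0.le
          (F_intInt h1 h2 ⟨le_refl 0, h1.le⟩ ⟨hm0.le, by linarith⟩) hg_int
        intro s hs
        have hslt : s < t₁ := by linarith [hs.2]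
        have := F_le_decay h2 hslt
        rw [← hδ_def] at this
        exact this
      have hval : ∫ s in (0:ℝ)..(t₁ - δ), 4 * c2 ^ 2 * δ ^ 2 * (t₁ - s) ^ (-(3:ℝ)/2)
          ≤ 8 * c2 ^ 2 * δ ^ ((3:ℝ)/2) := by
        rw [intervalIntegral.integral_const_mul]
        have hcomp := intervalIntegral.integral_comp_sub_left
          (fun u : ℝ => u ^ (-(3:ℝ)/2)) t₁ (a := 0) (b := t₁ - δ)
        rw [hcomp]
        have ht₁m : t₁ - (t₁ - δ) = δ := by ring
        rw [ht₁m, sub_zero]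
        have h0mem : (0:ℝ) ∉ Set.uIcc δ t₁ := by
          rw [Set.uIcc_of_le (by linarith)]
          intro h
          exact absurd h.1 (not_le.mpr hδ)
        rw [integral_rpow (Or.inr ⟨by norm_num, h0mem⟩)]
        have he : (-(3:ℝ)/2 + 1) = -(1:ℝ)/2 := by norm_num
        rw [he]
        have ht₁pos : (0:ℝ) < t₁ := h1
        have htnn : 0 ≤ t₁ ^ (-(1:ℝ)/2) := Real.rpow_nonneg h1.le _
        have hδpow : δ ^ 2 * δ ^ (-(1:ℝ)/2) = δ ^ ((3:ℝ)/2) := by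
          rw [← Real.rpow_natCast δ 2, ← Real.rpow_add hδ]
          norm_num
        have hδnn : 0 ≤ δ ^ (-(1:ℝ)/2) := Real.rpow_nonneg hδ.le _
        have hbound : (t₁ ^ (-(1:ℝ)/2) - δ ^ (-(1:ℝ)/2)) / (-(1:ℝ)/2)
            ≤ 2 * δ ^ (-(1:ℝ)/2) := by
          rw [div_le_iff_of_neg (by norm_num)]
          nlinarith
        calc 4 * c2 ^ 2 * δ ^ 2 * ((t₁ ^ (-(1:ℝ)/2) - δ ^ (-(1:ℝ)/2)) / (-(1:ℝ)/2))
            ≤ 4 * c2 ^ 2 * δ ^ 2 * (2 * δ ^ (-(1:ℝ)/2)) := by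
              apply mul_le_mul_of_nonneg_left hbound (by positivity)
          _ = 8 * c2 ^ 2 * (δ ^ 2 * δ ^ (-(1:ℝ)/2)) := by ring
          _ = 8 * c2 ^ 2 * δ ^ ((3:ℝ)/2) := by rw [hδpow]
      exact hmono.trans hval
    have := add_le_add piece1 piece2
    refine this.trans ?_
    nlinarith [sq_nonneg c2, hδ32]
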